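/- For each N ≥ 1 let p_ERS(N) := ∑_{k=1}^N ∫_{X^N} (∏_{i=1}^N q(xⁱ)) · (w(x^k)/∑_{j=1}^N w(x^j)) · (Ẑ(x)/Z̄_k(x)) dμ^{⊗N}(x). Then p_ERS(N) → 1 as N → ∞. -/

import Mathlib

open MeasureTheory Finset Filter

noncomputable section

/-- The ensemble estimate `Ẑ(x) = N⁻¹ ∑ᵢ w(xⁱ)`. -/
def ersZhat {X : Type*} (N : ℕ) (w : X → ℝ) (x : Fin N → X) : ℝ :=
  (N : ℝ)⁻¹ * ∑ i, w (x i)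

/-- The upper bound `Z̄ₖ(x) = Ẑ(x) + N⁻¹ (w̄ - w(x^k))`. -/
def ersZbar {X : Type*} (N : ℕ) (w : X → ℝ) (wbar : ℝ) (k : Fin N) (x : Fin N → X) : ℝ :=
  ersZhat N w x + (N : ℝ)⁻¹ * (wbar - w (x k))

lemma ers_aux_pi_prod {X : Type*} [MeasurableSpace X] (μ : Measure X) [SigmaFinite μ]
    (N : ℕ) (f : Fin N → X → ℝ) :
    ∫ x : Fin N → X, ∏ i, f i (x i) ∂(Measure.pi fun _ => μ) = ∏ i, ∫ x, f i x ∂μ := by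
  letI : MeasureSpace X := ⟨μ⟩
  rw [show (Measure.pi fun _ : Fin N => μ) = (volume : Measure (Fin N → X)) from (volume_pi).symm]
  exact integral_fintype_prod_eq_prod f

lemma ers_aux_pi_prod_int {X : Type*} [MeasurableSpace X] (μ : Measure X) [SigmaFinite μ]
    (N : ℕ) (f : Fin N → X → ℝ) (hf : ∀ i, Integrable (f i) μ) :
    Integrable (fun x : Fin N → X => ∏ i, f i (x i)) (Measure.pi fun _ => μ) := by
  letI : MeasureSpace X := ⟨μ⟩
  rw [show (Measure.pi fun _ : Fin N => μ) = (volume : Measure (Fin N → X)) from (volume_pi).symm]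
  exact Integrable.fintype_prod hf

lemma ers_aux_ae_pi {X : Type*} [MeasurableSpace X] {μ : Measure X} [SigmaFinite μ]
    (N : ℕ) {P : X → Prop} (h : ∀ᵐ x ∂μ, P x) :
    ∀ᵐ x : Fin N → X ∂(Measure.pi fun _ => μ), ∀ i, P (x i) :=
  ae_all_iff.2 fun _ => Measure.tendsto_eval_ae_ae.eventually h

/-- factor functions for the variance computation -/
def ersG {X : Type*} (q w : X → ℝ) (Z : ℝ) {N : ℕ} (i j l : Fin N) : X → ℝ :=
  fun y => q y * ((if l = i then w y - Z else 1) * (if l = j then w y - Z else 1))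

lemma ers_abs_le {a ε : ℝ} (hε : 0 < ε) : |a| ≤ ε / 2 + a ^ 2 / (2 * ε) := by
  rw [show ε / 2 + a ^ 2 / (2 * ε) = (ε * ε + a ^ 2) / (2 * ε) by field_simp,
    le_div_iff₀ (by linarith)]
  nlinarith [sq_nonneg (|a| - ε), sq_abs a, abs_nonneg a]

lemma ers_div_le {S NZ wbar : ℝ} (hS : 0 < S) (hw : 0 < wbar) (hNZ : 0 < NZ) :
    wbar / (S + wbar) ≤ (wbar + |S - NZ|) / (NZ + wbar) := by
  rw [div_le_div_iff₀ (by linarith) (by linarith)]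
  have h1 : NZ - S ≤ |S - NZ| := by rw [abs_sub_comm]; exact le_abs_self _
  have h0 : (0 : ℝ) ≤ |S - NZ| := abs_nonneg _
  nlinarith [mul_le_mul_of_nonneg_right h1 hw.le, mul_nonneg h0 hS.le]

lemma ers_sum_lb {S NZ wbar ε : ℝ} (hS : 0 < S) (hw : 0 < wbar) (hNZ : 0 < NZ) (hε : 0 < ε) :
    1 - (wbar + ε / 2) / (NZ + wbar) - (S - NZ) ^ 2 * (1 / (2 * ε * (NZ + wbar))) ≤
      S / (S + wbar) := by
  have hA : (0 : ℝ) < NZ + wbar := by linarith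
  have h2 : S / (S + wbar) = 1 - wbar / (S + wbar) := by
    field_simp
    ring
  have h3 := ers_div_le hS hw hNZ
  have h4 := ers_abs_le (a := S - NZ) hε
  have h5 : (wbar + |S - NZ|) / (NZ + wbar) ≤
      (wbar + ε / 2) / (NZ + wbar) + (S - NZ) ^ 2 * (1 / (2 * ε * (NZ + wbar))) := by
    have h5a : (wbar + |S - NZ|) / (NZ + wbar) ≤
        (wbar + (ε / 2 + (S - NZ) ^ 2 / (2 * ε))) / (NZ + wbar) :=
      div_le_div_of_nonneg_right (by linarith) hA.le
    refine h5a.trans (le_of_eq ?_)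
    have hεne : ε ≠ 0 := ne_of_gt hε
    have hAne : NZ + wbar ≠ 0 := ne_of_gt hA
    field_simp
    ring
  rw [h2]
  have := h3.trans h5
  linarith

lemma ers_step1_pt {P wk S D n : ℝ} (hS : S ≠ 0) (hD : D ≠ 0) (hn : n ≠ 0) :
    P * (wk / S) * ((n * S) / (n * D)) = P * (wk / D) := by
  rw [mul_div_mul_left _ _ hn]
  field_simp

lemma ers_final_eq {wbar s Z : ℝ} {N : ℕ} (hw : 0 < wbar) (hs : 0 < s) (hZ : 0 < Z)
    (hsq : s * s = (N : ℝ)) :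
    1 - (wbar + (wbar * s) / 2) / ((N : ℝ) * Z + wbar) -
      ((N : ℝ) * wbar ^ 2) * (1 / (2 * (wbar * s) * ((N : ℝ) * Z + wbar))) =
    1 - wbar * (1 + s) / ((N : ℝ) * Z + wbar) := by
  rw [← hsq]
  have h1 : s * s * Z + wbar ≠ 0 := by nlinarith [mul_pos (mul_pos hs hs) hZ]
  have h2 : wbar ≠ 0 := ne_of_gt hw
  have h3 : s ≠ 0 := ne_of_gt hs
  field_simp
  ring

set_option maxHeartbeats 1000000 in
lemma ers_key {X : Type*} [MeasurableSpace X] (μ : Measure X) [SigmaFinite μ]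
    (q w : X → ℝ) (hqm : Measurable q) (hwm : Measurable w)
    (hqnn : ∀ x, 0 ≤ q x) (hwnn : ∀ x, 0 ≤ w x)
    (hqint : Integrable q μ) (hqprob : ∫ x, q x ∂μ = 1)
    (Z wbar : ℝ) (hZpos : 0 < Z) (hZle : Z ≤ wbar)
    (hgood : ∀ᵐ x ∂μ, (0 < q x → 0 < w x) ∧ w x ≤ wbar)
    (hqw_int : Integrable (fun x => q x * w x) μ)
    (hqw_val : ∫ x, q x * w x ∂μ = Z)
    (N : ℕ) (hN1 : 1 ≤ N) :
    1 - wbar * (1 + Real.sqrt N) / (N * Z + wbar) ≤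
      (∑ k : Fin N, ∫ x : Fin N → X,
        (∏ i, q (x i)) * (w (x k) / ∑ j, w (x j)) *
          (ersZhat N w x / ersZbar N w wbar k x)
        ∂(Measure.pi fun _ : Fin N => μ)) ∧
    (∑ k : Fin N, ∫ x : Fin N → X,
        (∏ i, q (x i)) * (w (x k) / ∑ j, w (x j)) *
          (ersZhat N w x / ersZbar N w wbar k x)
        ∂(Measure.pi fun _ : Fin N => μ)) ≤ 1 := by
  classical
  haveI : Nonempty (Fin N) := ⟨⟨0, hN1⟩⟩
  have hwbar : 0 < wbar := hZpos.trans_le hZle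
  have hNpos : (0 : ℝ) < N := by exact_mod_cast hN1
  -- a.e. bound on |w - Z|
  have hb : ∀ᵐ x ∂μ, |w x - Z| ≤ wbar := by
    filter_upwards [hgood] with x hx
    exact abs_le.2 ⟨by linarith [hwnn x], by linarith [hx.2]⟩
  -- integrability facts at the level of μ
  have hm1 : Measurable fun x => q x * (w x - Z) := hqm.mul (hwm.sub measurable_const)
  have hm2 : Measurable fun x => q x * (w x - Z) ^ 2 :=
    hqm.mul ((hwm.sub measurable_const).pow measurable_const)
  have hint1 : Integrable (fun x => q x * (w x - Z)) μ := by
    refine Integrable.mono' (hqint.const_mul wbar) hm1.aestronglyMeasurable ?_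
    filter_upwards [hb] with x hx
    rw [Real.norm_eq_abs, abs_mul, abs_of_nonneg (hqnn x)]
    calc q x * |w x - Z| ≤ q x * wbar := mul_le_mul_of_nonneg_left hx (hqnn x)
      _ = wbar * q x := mul_comm _ _
  have hint2 : Integrable (fun x => q x * (w x - Z) ^ 2) μ := by
    refine Integrable.mono' (hqint.const_mul (wbar ^ 2)) hm2.aestronglyMeasurable ?_
    filter_upwards [hb] with x hx
    have h1 : (w x - Z) ^ 2 ≤ wbar ^ 2 := by
      nlinarith [sq_abs (w x - Z), abs_nonneg (w x - Z)]
    rw [Real.norm_eq_abs, abs_of_nonneg (mul_nonneg (hqnn x) (sq_nonneg _))]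
    calc q x * (w x - Z) ^ 2 ≤ q x * wbar ^ 2 := mul_le_mul_of_nonneg_left h1 (hqnn x)
      _ = wbar ^ 2 * q x := mul_comm _ _
  have hint1_val : ∫ x, q x * (w x - Z) ∂μ = 0 := by
    have hfe : (fun x => q x * (w x - Z)) = fun x => q x * w x - Z * q x :=
      funext fun x => by ring
    rw [hfe, integral_sub hqw_int (hqint.const_mul Z), hqw_val, integral_const_mul, hqprob,
      mul_one, sub_self]
  set V : ℝ := ∫ x, q x * (w x - Z) ^ 2 ∂μ with hV
  have hVle : V ≤ wbar ^ 2 := by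
    rw [hV]
    calc ∫ x, q x * (w x - Z) ^ 2 ∂μ ≤ ∫ x, wbar ^ 2 * q x ∂μ := by
          refine integral_mono_ae hint2 (hqint.const_mul _) ?_
          filter_upwards [hb] with x hx
          have h1 : (w x - Z) ^ 2 ≤ wbar ^ 2 := by
            nlinarith [sq_abs (w x - Z), abs_nonneg (w x - Z)]
          calc q x * (w x - Z) ^ 2 ≤ q x * wbar ^ 2 := mul_le_mul_of_nonneg_left h1 (hqnn x)
            _ = wbar ^ 2 * q x := mul_comm _ _
      _ = wbar ^ 2 := by rw [integral_const_mul, hqprob, mul_one]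
  -- measurability on the product space
  have hPm : Measurable fun x : Fin N → X => ∏ i, q (x i) :=
    Finset.measurable_prod _ fun i _ => hqm.comp (measurable_pi_apply i)
  have hSm : Measurable fun x : Fin N → X => ∑ j, w (x j) :=
    Finset.measurable_sum _ fun j _ => hwm.comp (measurable_pi_apply j)
  have hwkm : ∀ k : Fin N, Measurable fun x : Fin N → X => w (x k) :=
    fun k => hwm.comp (measurable_pi_apply k)
  have hPnn : ∀ x : Fin N → X, 0 ≤ ∏ i, q (x i) :=
    fun x => Finset.prod_nonneg fun i _ => hqnn _
  -- the good event on the product space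
  have hGE : ∀ᵐ x : Fin N → X ∂(Measure.pi fun _ : Fin N => μ),
      ∀ i, (0 < q (x i) → 0 < w (x i)) ∧ w (x i) ≤ wbar := ers_aux_ae_pi N hgood
  have hcases : ∀ x : Fin N → X, (∀ i, (0 < q (x i) → 0 < w (x i)) ∧ w (x i) ≤ wbar) →
      (∏ i, q (x i)) = 0 ∨ ((∀ i, 0 < w (x i)) ∧ 0 < ∑ j, w (x j)) := by
    intro x hx
    by_cases hall : ∀ i, 0 < q (x i)
    · right
      have hwpos : ∀ i, 0 < w (x i) := fun i => (hx i).1 (hall i)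
      exact ⟨hwpos, Finset.sum_pos (fun j _ => hwpos j) Finset.univ_nonempty⟩
    · left
      push_neg at hall
      obtain ⟨i, hi⟩ := hall
      exact Finset.prod_eq_zero (Finset.mem_univ i) (le_antisymm hi (hqnn _))
  -- integrability of the product density and of the simplified integrands
  have hPint : Integrable (fun x : Fin N → X => ∏ i, q (x i)) (Measure.pi fun _ : Fin N => μ) :=
    ers_aux_pi_prod_int μ N (fun _ => q) fun _ => hqint
  have hPval : ∫ x : Fin N → X, ∏ i, q (x i) ∂(Measure.pi fun _ : Fin N => μ) = 1 := by
    rw [ers_aux_pi_prod μ N fun _ => q]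
    simp [hqprob]
  have hhk_int : ∀ k : Fin N, Integrable
      (fun x : Fin N → X => (∏ i, q (x i)) * (w (x k) / (∑ j, w (x j) + (wbar - w (x k)))))
      (Measure.pi fun _ : Fin N => μ) := by
    intro k
    refine Integrable.mono' hPint
      ((hPm.mul ((hwkm k).div (hSm.add (measurable_const.sub (hwkm k))))).aestronglyMeasurable) ?_
    filter_upwards [hGE] with x hx
    rcases hcases x hx with h0 | ⟨hwpos, hSpos⟩
    · rw [h0, zero_mul]
      simp
    · have hkS : w (x k) ≤ ∑ j, w (x j) :=
        Finset.single_le_sum (f := fun j => w (x j)) (fun j _ => hwnn _) (Finset.mem_univ k)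
      have hDpos : 0 < ∑ j, w (x j) + (wbar - w (x k)) := by
        have := (hx k).2; linarith
      have hr1 : w (x k) / (∑ j, w (x j) + (wbar - w (x k))) ≤ 1 := by
        rw [div_le_one hDpos]
        have := (hx k).2; linarith
      have hr0 : 0 ≤ w (x k) / (∑ j, w (x j) + (wbar - w (x k))) :=
        div_nonneg (hwnn _) hDpos.le
      rw [Real.norm_eq_abs, abs_of_nonneg (mul_nonneg (hPnn x) hr0)]
      calc (∏ i, q (x i)) * (w (x k) / (∑ j, w (x j) + (wbar - w (x k))))
          ≤ (∏ i, q (x i)) * 1 := mul_le_mul_of_nonneg_left hr1 (hPnn x)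
        _ = ∏ i, q (x i) := mul_one _
  -- Step 1: simplify the integrand
  have hstep1 : ∀ k : Fin N,
      (∫ x : Fin N → X, (∏ i, q (x i)) * (w (x k) / ∑ j, w (x j)) *
          (ersZhat N w x / ersZbar N w wbar k x) ∂(Measure.pi fun _ : Fin N => μ)) =
      ∫ x : Fin N → X, (∏ i, q (x i)) * (w (x k) / (∑ j, w (x j) + (wbar - w (x k))))
          ∂(Measure.pi fun _ : Fin N => μ) := by
    intro k
    refine integral_congr_ae ?_
    filter_upwards [hGE] with x hx
    rcases hcases x hx with h0 | ⟨hwpos, hSpos⟩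
    · simp only [h0, zero_mul]
    · have hDpos : 0 < ∑ j, w (x j) + (wbar - w (x k)) := by
        have := (hx k).2; linarith
      have hzb : ersZbar N w wbar k x = (N : ℝ)⁻¹ * (∑ j, w (x j) + (wbar - w (x k))) := by
        simp only [ersZbar, ersZhat]; ring
      have hzh : ersZhat N w x = (N : ℝ)⁻¹ * ∑ j, w (x j) := rfl
      rw [hzh, hzb]
      exact ers_step1_pt (ne_of_gt hSpos) (ne_of_gt hDpos) (inv_ne_zero (ne_of_gt hNpos))
  -- Step 2: sum of integrals as a single integral
  have hFeq : (∑ k : Fin N, ∫ x : Fin N → X,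
        (∏ i, q (x i)) * (w (x k) / ∑ j, w (x j)) *
          (ersZhat N w x / ersZbar N w wbar k x) ∂(Measure.pi fun _ : Fin N => μ)) =
      ∫ x : Fin N → X,
        (∏ i, q (x i)) * ∑ k, w (x k) / (∑ j, w (x j) + (wbar - w (x k)))
        ∂(Measure.pi fun _ : Fin N => μ) := by
    rw [Finset.sum_congr rfl fun k _ => hstep1 k,
      ← integral_finset_sum _ fun k _ => hhk_int k]
    refine integral_congr_ae (ae_of_all _ fun x => ?_)
    simp only [Finset.mul_sum]
  have hT_int : Integrable
      (fun x : Fin N → X => (∏ i, q (x i)) * ∑ k, w (x k) / (∑ j, w (x j) + (wbar - w (x k))))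
      (Measure.pi fun _ : Fin N => μ) := by
    have h := integrable_finset_sum (μ := Measure.pi fun _ : Fin N => μ) Finset.univ
      fun k _ => hhk_int k
    refine h.congr (ae_of_all _ fun x => ?_)
    simp only [Finset.mul_sum]
  -- Upper bound
  have hupper : (∫ x : Fin N → X,
        (∏ i, q (x i)) * ∑ k, w (x k) / (∑ j, w (x j) + (wbar - w (x k)))
        ∂(Measure.pi fun _ : Fin N => μ)) ≤ 1 := by
    calc (∫ x : Fin N → X,
          (∏ i, q (x i)) * ∑ k, w (x k) / (∑ j, w (x j) + (wbar - w (x k)))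
          ∂(Measure.pi fun _ : Fin N => μ))
        ≤ ∫ x : Fin N → X, ∏ i, q (x i) ∂(Measure.pi fun _ : Fin N => μ) := by
          refine integral_mono_ae hT_int hPint ?_
          filter_upwards [hGE] with x hx
          rcases hcases x hx with h0 | ⟨hwpos, hSpos⟩
          · rw [h0, zero_mul]
          · have hsum_le : (∑ k, w (x k) / (∑ j, w (x j) + (wbar - w (x k)))) ≤ 1 := by
              have h1 : ∀ k ∈ Finset.univ,
                  w (x k) / (∑ j, w (x j) + (wbar - w (x k))) ≤ w (x k) / ∑ j, w (x j) := by
                intro k _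
                refine div_le_div_of_nonneg_left (hwnn _) hSpos ?_
                have := (hx k).2; linarith
              calc (∑ k, w (x k) / (∑ j, w (x j) + (wbar - w (x k))))
                  ≤ ∑ k, w (x k) / ∑ j, w (x j) := Finset.sum_le_sum h1
                _ = (∑ k, w (x k)) / ∑ j, w (x j) := by rw [Finset.sum_div]
                _ = 1 := div_self (ne_of_gt hSpos)
            calc (∏ i, q (x i)) * ∑ k, w (x k) / (∑ j, w (x j) + (wbar - w (x k)))
                ≤ (∏ i, q (x i)) * 1 := mul_le_mul_of_nonneg_left hsum_le (hPnn x)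
              _ = ∏ i, q (x i) := mul_one _
      _ = 1 := hPval
  -- Variance computation
  have hGint : ∀ i j l : Fin N, Integrable (ersG q w Z i j l) μ := by
    intro i j l
    by_cases hli : l = i <;> by_cases hlj : l = j
    · have he : ersG q w Z i j l = fun y => q y * (w y - Z) ^ 2 := by
        funext y; simp only [ersG]; rw [if_pos hli, if_pos hlj]; ring
      rw [he]; exact hint2
    · have he : ersG q w Z i j l = fun y => q y * (w y - Z) := by
        funext y; simp only [ersG]; rw [if_pos hli, if_neg hlj, mul_one]
      rw [he]; exact hint1
    · have he : ersG q w Z i j l = fun y => q y * (w y - Z) := by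
        funext y; simp only [ersG]; rw [if_neg hli, if_pos hlj, one_mul]
      rw [he]; exact hint1
    · have he : ersG q w Z i j l = fun y => q y := by
        funext y; simp only [ersG]; rw [if_neg hli, if_neg hlj, mul_one, mul_one]
      rw [he]; exact hqint
  have hGval : ∀ i l : Fin N, ∫ y, ersG q w Z i i l y ∂μ = if l = i then V else 1 := by
    intro i l
    by_cases hli : l = i
    · rw [if_pos hli]
      have he : ersG q w Z i i l = fun y => q y * (w y - Z) ^ 2 := by
        funext y; simp only [ersG]; rw [if_pos hli]; ring
      rw [he, hV]
    · rw [if_neg hli]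
      have he : ersG q w Z i i l = fun y => q y := by
        funext y; simp only [ersG]; rw [if_neg hli, mul_one, mul_one]
      rw [he]
      exact hqprob
  have hGval0 : ∀ i j : Fin N, i ≠ j → ∫ y, ersG q w Z i j i y ∂μ = 0 := by
    intro i j hij
    have he : ersG q w Z i j i = fun y => q y * (w y - Z) := by
      funext y; simp [ersG, hij]
    rw [he, hint1_val]
  have hexpand : ∀ x : Fin N → X,
      (∏ i, q (x i)) * (∑ j, w (x j) - N * Z) ^ 2 =
      ∑ i, ∑ j, ∏ l, ersG q w Z i j l (x l) := by
    intro x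
    have h1 : (∑ j, w (x j)) - (N : ℝ) * Z = ∑ j, (w (x j) - Z) := by
      rw [Finset.sum_sub_distrib, Finset.sum_const, Finset.card_univ, Fintype.card_fin,
        nsmul_eq_mul]
    have h2 : ∀ i j : Fin N, ∏ l, ersG q w Z i j l (x l) =
        (∏ l, q (x l)) * ((w (x i) - Z) * (w (x j) - Z)) := by
      intro i j
      simp only [ersG]
      rw [Finset.prod_mul_distrib, Finset.prod_mul_distrib, Finset.prod_ite_eq',
        Finset.prod_ite_eq']
      simp
    rw [h1, sq, Finset.sum_mul_sum, Finset.mul_sum]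
    refine Finset.sum_congr rfl fun i _ => ?_
    rw [Finset.mul_sum]
    exact Finset.sum_congr rfl fun j _ => (h2 i j).symm
  have hvar_int : Integrable
      (fun x : Fin N → X => (∏ i, q (x i)) * (∑ j, w (x j) - N * Z) ^ 2)
      (Measure.pi fun _ : Fin N => μ) := by
    have h : Integrable (fun x : Fin N → X => ∑ i, ∑ j, ∏ l, ersG q w Z i j l (x l))
        (Measure.pi fun _ : Fin N => μ) := by
      refine integrable_finset_sum _ fun i _ => integrable_finset_sum _ fun j _ => ?_
      exact ers_aux_pi_prod_int μ N _ fun l => hGint i j l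
    exact h.congr (ae_of_all _ fun x => (hexpand x).symm)
  have hvar_val : (∫ x : Fin N → X, (∏ i, q (x i)) * (∑ j, w (x j) - N * Z) ^ 2
        ∂(Measure.pi fun _ : Fin N => μ)) = N * V := by
    have h1 : (∫ x : Fin N → X, (∏ i, q (x i)) * (∑ j, w (x j) - N * Z) ^ 2
        ∂(Measure.pi fun _ : Fin N => μ)) =
        ∑ i, ∑ j, ∫ x : Fin N → X, ∏ l, ersG q w Z i j l (x l)
          ∂(Measure.pi fun _ : Fin N => μ) := by
      rw [integral_congr_ae (ae_of_all _ fun x => hexpand x)]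
      rw [integral_finset_sum _ fun i _ => integrable_finset_sum _ fun j _ =>
        ers_aux_pi_prod_int μ N _ fun l => hGint i j l]
      exact Finset.sum_congr rfl fun i _ => integral_finset_sum _ fun j _ =>
        ers_aux_pi_prod_int μ N _ fun l => hGint i j l
    rw [h1]
    have h2 : ∀ i j : Fin N, (∫ x : Fin N → X, ∏ l, ersG q w Z i j l (x l)
        ∂(Measure.pi fun _ : Fin N => μ)) = if j = i then V else 0 := by
      intro i j
      rw [ers_aux_pi_prod μ N fun l => ersG q w Z i j l]
      by_cases hji : j = i
      · subst hji
        rw [if_pos rfl]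
        calc (∏ l, ∫ y, ersG q w Z j j l y ∂μ) = ∏ l, if l = j then V else 1 :=
            Finset.prod_congr rfl fun l _ => hGval j l
          _ = V := by rw [Finset.prod_ite_eq']; simp
      · rw [if_neg hji]
        refine Finset.prod_eq_zero (Finset.mem_univ i) ?_
        exact hGval0 i j fun h => hji h.symm
    calc (∑ i, ∑ j, ∫ x : Fin N → X, ∏ l, ersG q w Z i j l (x l)
          ∂(Measure.pi fun _ : Fin N => μ))
        = ∑ i : Fin N, ∑ j, if j = i then V else (0 : ℝ) :=
          Finset.sum_congr rfl fun i _ => Finset.sum_congr rfl fun j _ => h2 i j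
      _ = ∑ _i : Fin N, V := Finset.sum_congr rfl fun i _ => by
          rw [Finset.sum_ite_eq']; simp
      _ = N * V := by rw [Finset.sum_const, Finset.card_univ, Fintype.card_fin, nsmul_eq_mul]
  -- Lower bound
  set s : ℝ := Real.sqrt N with hs
  have hspos : 0 < s := Real.sqrt_pos.2 hNpos
  have hssq : s * s = (N : ℝ) := Real.mul_self_sqrt hNpos.le
  have hεpos : 0 < wbar * s := mul_pos hwbar hspos
  have hNZpos : 0 < (N : ℝ) * Z := mul_pos hNpos hZpos
  have hApos : 0 < (N : ℝ) * Z + wbar := by linarith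
  have hlow_ae : ∀ᵐ x : Fin N → X ∂(Measure.pi fun _ : Fin N => μ),
      (∏ i, q (x i)) * (1 - (wbar + (wbar * s) / 2) / ((N : ℝ) * Z + wbar)) -
        ((∏ i, q (x i)) * (∑ j, w (x j) - N * Z) ^ 2) *
          (1 / (2 * (wbar * s) * ((N : ℝ) * Z + wbar))) ≤
      (∏ i, q (x i)) * ∑ k, w (x k) / (∑ j, w (x j) + (wbar - w (x k))) := by
    filter_upwards [hGE] with x hx
    rcases hcases x hx with h0 | ⟨hwpos, hSpos⟩
    · rw [h0]
      simp
    · have h1 : (∑ j, w (x j)) / ((∑ j, w (x j)) + wbar) ≤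
          ∑ k, w (x k) / (∑ j, w (x j) + (wbar - w (x k))) := by
        have h1a : ∀ k ∈ Finset.univ,
            w (x k) / ((∑ j, w (x j)) + wbar) ≤
              w (x k) / (∑ j, w (x j) + (wbar - w (x k))) := by
          intro k _
          have hDpos : 0 < ∑ j, w (x j) + (wbar - w (x k)) := by
            have := (hx k).2; linarith
          refine div_le_div_of_nonneg_left (hwnn _) hDpos ?_
          have := hwnn (x k); linarith
        calc (∑ j, w (x j)) / ((∑ j, w (x j)) + wbar)
            = ∑ k, w (x k) / ((∑ j, w (x j)) + wbar) := by rw [← Finset.sum_div]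
          _ ≤ _ := Finset.sum_le_sum h1a
      have h6 := ers_sum_lb (S := ∑ j, w (x j)) (NZ := (N : ℝ) * Z) (wbar := wbar)
        (ε := wbar * s) hSpos hwbar hNZpos hεpos
      have hsum_ge : 1 - (wbar + (wbar * s) / 2) / ((N : ℝ) * Z + wbar) -
          (∑ j, w (x j) - (N : ℝ) * Z) ^ 2 * (1 / (2 * (wbar * s) * ((N : ℝ) * Z + wbar))) ≤
          ∑ k, w (x k) / (∑ j, w (x j) + (wbar - w (x k))) :=
        le_trans h6 h1
      calc (∏ i, q (x i)) * (1 - (wbar + (wbar * s) / 2) / ((N : ℝ) * Z + wbar)) -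
            ((∏ i, q (x i)) * (∑ j, w (x j) - N * Z) ^ 2) *
              (1 / (2 * (wbar * s) * ((N : ℝ) * Z + wbar)))
          = (∏ i, q (x i)) *
              (1 - (wbar + (wbar * s) / 2) / ((N : ℝ) * Z + wbar) -
                (∑ j, w (x j) - (N : ℝ) * Z) ^ 2 *
                  (1 / (2 * (wbar * s) * ((N : ℝ) * Z + wbar)))) := by
            ring
        _ ≤ (∏ i, q (x i)) * ∑ k, w (x k) / (∑ j, w (x j) + (wbar - w (x k))) :=
            mul_le_mul_of_nonneg_left hsum_ge (hPnn x)
  have hlow_int : Integrable (fun x : Fin N → X =>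
      (∏ i, q (x i)) * (1 - (wbar + (wbar * s) / 2) / ((N : ℝ) * Z + wbar)) -
        ((∏ i, q (x i)) * (∑ j, w (x j) - N * Z) ^ 2) *
          (1 / (2 * (wbar * s) * ((N : ℝ) * Z + wbar))))
      (Measure.pi fun _ : Fin N => μ) :=
    (hPint.mul_const _).sub (hvar_int.mul_const _)
  have hlower : 1 * (1 - (wbar + (wbar * s) / 2) / ((N : ℝ) * Z + wbar)) -
      ((N : ℝ) * V) * (1 / (2 * (wbar * s) * ((N : ℝ) * Z + wbar))) ≤
      ∫ x : Fin N → X,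
        (∏ i, q (x i)) * ∑ k, w (x k) / (∑ j, w (x j) + (wbar - w (x k)))
        ∂(Measure.pi fun _ : Fin N => μ) := by
    have h := integral_mono_ae hlow_int hT_int hlow_ae
    rw [integral_sub (hPint.mul_const _) (hvar_int.mul_const _), integral_mul_const,
      integral_mul_const, hPval, hvar_val] at h
    exact h
  -- assemble
  have hfinal : 1 - wbar * (1 + s) / ((N : ℝ) * Z + wbar) ≤
      1 * (1 - (wbar + (wbar * s) / 2) / ((N : ℝ) * Z + wbar)) -
      ((N : ℝ) * V) * (1 / (2 * (wbar * s) * ((N : ℝ) * Z + wbar))) := by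
    have hd : (0 : ℝ) ≤ 1 / (2 * (wbar * s) * ((N : ℝ) * Z + wbar)) := by positivity
    have hNV : (N : ℝ) * V ≤ (N : ℝ) * wbar ^ 2 :=
      mul_le_mul_of_nonneg_left hVle (by positivity)
    have heq := ers_final_eq (N := N) hwbar hspos hZpos hssq
    have hmono : ((N : ℝ) * V) * (1 / (2 * (wbar * s) * ((N : ℝ) * Z + wbar))) ≤
        ((N : ℝ) * wbar ^ 2) * (1 / (2 * (wbar * s) * ((N : ℝ) * Z + wbar))) :=
      mul_le_mul_of_nonneg_right hNV hd
    rw [one_mul]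
    linarith
  constructor
  · rw [hFeq]
    exact le_trans hfinal hlower
  · rw [hFeq]
    exact hupper


/-- The average acceptance probability of static Ensemble Rejection
Sampling tends to `1` as the ensemble size `N` tends to infinity. -/
theorem ers_static_acceptance_tendsto_one
    {X : Type*} [MeasurableSpace X] (μ : Measure X) [SigmaFinite μ]
    (γ q : X → ℝ) (hγm : Measurable γ) (hqm : Measurable q)
    (hγnn : ∀ x, 0 ≤ γ x) (hqnn : ∀ x, 0 ≤ q x)
    (hqprob : ∫ x, q x ∂μ = 1)
    (hnull : μ {x | 0 < γ x ∧ q x = 0} = 0)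
    (Z : ℝ) (hZ : Z = ∫ x, γ x ∂μ) (hZpos : 0 < Z) (hγint : Integrable γ μ)
    (w : X → ℝ) (hw : ∀ x, w x = γ x / q x)
    (wbar : ℝ) (hwbound : ∀ᵐ x ∂μ, 0 < q x → 0 < w x ∧ w x ≤ wbar) :
    Tendsto (fun N : ℕ =>
      ∑ k : Fin N, ∫ x : Fin N → X,
        (∏ i, q (x i)) * (w (x k) / ∑ j, w (x j)) *
          (ersZhat N w x / ersZbar N w wbar k x)
        ∂(Measure.pi fun _ : Fin N => μ)) atTop (nhds 1) := by
  classical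
  have hwm : Measurable w := by
    have hfe : w = fun x => γ x / q x := funext hw
    rw [hfe]; exact hγm.div hqm
  have hwnn : ∀ x, 0 ≤ w x := fun x => by
    rw [hw]; exact div_nonneg (hγnn x) (hqnn x)
  have hqint : Integrable q μ := by
    by_contra h
    rw [integral_undef h] at hqprob
    norm_num at hqprob
  have hnmem : ∀ᵐ x ∂μ, ¬(0 < γ x ∧ q x = 0) := by
    rw [ae_iff]
    simpa only [not_not] using hnull
  have hqw_eq : (fun x => q x * w x) =ᵐ[μ] γ := by
    filter_upwards [hnmem] with x hx
    rcases eq_or_lt_of_le (hqnn x) with h0 | h0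
    · have hγ0 : γ x = 0 := by
        by_contra hg
        exact hx ⟨lt_of_le_of_ne (hγnn x) (Ne.symm hg), h0.symm⟩
      rw [← h0, zero_mul, hγ0]
    · rw [hw]
      field_simp
  have hqw_int : Integrable (fun x => q x * w x) μ := hγint.congr hqw_eq.symm
  have hqw_val : ∫ x, q x * w x ∂μ = Z := by
    rw [integral_congr_ae hqw_eq, ← hZ]
  have hZle : Z ≤ wbar := by
    rw [← hqw_val]
    calc ∫ x, q x * w x ∂μ ≤ ∫ x, q x * wbar ∂μ := by
          refine integral_mono_ae hqw_int (hqint.mul_const wbar) ?_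
          filter_upwards [hwbound] with x hx
          rcases eq_or_lt_of_le (hqnn x) with h0 | h0
          · rw [← h0, zero_mul, zero_mul]
          · exact mul_le_mul_of_nonneg_left (hx h0).2 h0.le
      _ = wbar := by rw [integral_mul_const, hqprob, one_mul]
  have hwbar : 0 < wbar := hZpos.trans_le hZle
  have hgood : ∀ᵐ x ∂μ, (0 < q x → 0 < w x) ∧ w x ≤ wbar := by
    filter_upwards [hwbound] with x hx
    rcases eq_or_lt_of_le (hqnn x) with h0 | h0
    · constructor
      · intro hq
        rw [← h0] at hq
        exact absurd hq (lt_irrefl 0)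
      · have hw0 : w x = 0 := by rw [hw, ← h0, div_zero]
        rw [hw0]
        exact hwbar.le
    · exact ⟨fun _ => (hx h0).1, (hx h0).2⟩
  -- the lower bound sequence tends to 1
  have hLtend : Tendsto (fun N : ℕ => 1 - wbar * (1 + Real.sqrt N) / (N * Z + wbar))
      atTop (nhds 1) := by
    have h0 : Tendsto (fun N : ℕ => wbar * (1 + Real.sqrt N) / (N * Z + wbar))
        atTop (nhds 0) := by
      have hub : Tendsto (fun N : ℕ => 2 * wbar / Z * Real.sqrt ((N : ℝ)⁻¹))
          atTop (nhds 0) := by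
        have h1 : Tendsto (fun N : ℕ => ((N : ℝ))⁻¹) atTop (nhds 0) :=
          tendsto_inv_atTop_nhds_zero_nat
        have h2 : Tendsto (fun N : ℕ => Real.sqrt ((N : ℝ)⁻¹)) atTop
            (nhds (Real.sqrt 0)) := (Real.continuous_sqrt.tendsto 0).comp h1
        rw [Real.sqrt_zero] at h2
        simpa using h2.const_mul (2 * wbar / Z)
      refine tendsto_of_tendsto_of_tendsto_of_le_of_le' tendsto_const_nhds hub ?_ ?_
      · filter_upwards with N
        have hN0 : (0 : ℝ) ≤ N := Nat.cast_nonneg N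
        refine div_nonneg (mul_nonneg hwbar.le ?_) ?_
        · positivity
        · nlinarith
      · filter_upwards [eventually_ge_atTop 1] with N hN
        have hNpos : (0 : ℝ) < N := by exact_mod_cast hN
        have hssq : Real.sqrt N * Real.sqrt N = (N : ℝ) := Real.mul_self_sqrt hNpos.le
        have hs1 : 1 ≤ Real.sqrt N := by
          rw [show (1 : ℝ) = Real.sqrt 1 from (Real.sqrt_one).symm]
          exact Real.sqrt_le_sqrt (by exact_mod_cast hN)
        have hspos : 0 < Real.sqrt N := lt_of_lt_of_le one_pos hs1
        have hApos : (0 : ℝ) < N * Z + wbar := by nlinarith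
        rw [Real.sqrt_inv]
        have hrhs : 2 * wbar / Z * (Real.sqrt N)⁻¹ = 2 * wbar / (Z * Real.sqrt N) := by
          field_simp
        rw [hrhs, div_le_div_iff₀ hApos (by positivity)]
        have hgoal : wbar * (1 + Real.sqrt N) * (Z * Real.sqrt N) ≤
            2 * wbar * ((Real.sqrt N * Real.sqrt N) * Z + wbar) := by
          nlinarith [mul_nonneg (mul_nonneg hwbar.le hZpos.le)
            (mul_nonneg (sub_nonneg.2 hs1) hspos.le), sq_nonneg wbar]
        rw [hssq] at hgoal
        exact hgoal
    have := tendsto_const_nhds (x := (1 : ℝ)) (f := atTop (α := ℕ)) |>.sub h0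
    simpa using this
  refine tendsto_of_tendsto_of_tendsto_of_le_of_le' hLtend tendsto_const_nhds ?_ ?_
  · filter_upwards [eventually_ge_atTop 1] with N hN
    exact (ers_key μ q w hqm hwm hqnn hwnn hqint hqprob Z wbar hZpos hZle hgood
      hqw_int hqw_val N hN).1
  · filter_upwards [eventually_ge_atTop 1] with N hN
    exact (ers_key μ q w hqm hwm hqnn hwnn hqint hqprob Z wbar hZpos hZle hgood
      hqw_int hqw_val N hN).2

end
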